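/- For every V ≥ 1 and all z, ε : Fin V → ℝ, the Bregman divergence of the log-sum-exp function Φ(z) = log Σ_v exp(z_v) admits the integral representation Φ(z) − Φ(z + ε) + Σ_v softmax(z + ε)_v · ε_v = ∫₀¹ t · ( Σ_v P_t(v) · ε_v² − (Σ_v P_t(v) · ε_v)² ) dt, where P_t = softmax(z + t·ε). -/

import Mathlib

/-- The softmax distribution of a logit vector `z : Fin V → ℝ`. -/
noncomputable def softmax {V : ℕ} (z : Fin V → ℝ) : Fin V → ℝ :=
  fun v => Real.exp (z v) / ∑ w, Real.exp (z w)

/-- The log-sum-exp function `Φ(z) = log Σ_v exp(z_v)`. -/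
noncomputable def logSumExp {V : ℕ} (z : Fin V → ℝ) : ℝ :=
  Real.log (∑ v, Real.exp (z v))

/-- integral representation of the Bregman divergence of log-sum-exp:
`Φ(z) − Φ(z + ε) + Σ_v softmax(z + ε)_v ε_v
  = ∫₀¹ t (Σ_v P_t(v) ε_v² − (Σ_v P_t(v) ε_v)²) dt`, where `P_t = softmax (z + t ε)`. -/
theorem bregman_logSumExp_integral_repr
    (V : ℕ) (hV : 1 ≤ V) (z ε : Fin V → ℝ) :
    logSumExp z - logSumExp (z + ε) + ∑ v, softmax (z + ε) v * ε v
      = ∫ t in (0:ℝ)..1,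
          t * ((∑ v, softmax (z + t • ε) v * (ε v) ^ 2)
            - (∑ v, softmax (z + t • ε) v * ε v) ^ 2) := by
  haveI : Nonempty (Fin V) := ⟨⟨0, hV⟩⟩
  set S : ℝ → ℝ := fun t => ∑ v, Real.exp (z v + t * ε v) with hSdef
  set S1 : ℝ → ℝ := fun t => ∑ v, ε v * Real.exp (z v + t * ε v) with hS1def
  set S2 : ℝ → ℝ := fun t => ∑ v, ε v ^ 2 * Real.exp (z v + t * ε v) with hS2def
  have hSpos : ∀ t, 0 < S t := fun t =>
    Finset.sum_pos (fun v _ => Real.exp_pos _) Finset.univ_nonempty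
  have hSne : ∀ t, S t ≠ 0 := fun t => (hSpos t).ne'
  have hlin : ∀ (v : Fin V) (t : ℝ), HasDerivAt (fun t : ℝ => z v + t * ε v) (ε v) t := by
    intro v t
    simpa using (hasDerivAt_mul_const (ε v)).const_add (z v)
  have hS : ∀ t, HasDerivAt S (S1 t) t := by
    intro t
    apply HasDerivAt.fun_sum
    intro v _
    simpa [mul_comm] using (hlin v t).exp
  have hS1 : ∀ t, HasDerivAt S1 (S2 t) t := by
    intro t
    apply HasDerivAt.fun_sum
    intro v _
    have := ((hlin v t).exp).const_mul (ε v)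
    exact this.congr_deriv (by ring)
  have hScont : Continuous S :=
    continuous_finset_sum _ fun v _ =>
      Real.continuous_exp.comp (by continuity)
  have hS1cont : Continuous S1 :=
    continuous_finset_sum _ fun v _ =>
      Continuous.mul continuous_const (Real.continuous_exp.comp (by continuity))
  have hS2cont : Continuous S2 :=
    continuous_finset_sum _ fun v _ =>
      Continuous.mul continuous_const (Real.continuous_exp.comp (by continuity))
  set G : ℝ → ℝ := fun t => t * (S1 t / S t) - Real.log (S t) with hGdef
  have hG : ∀ t, HasDerivAt G (t * (S2 t / S t - (S1 t / S t) ^ 2)) t := by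
    intro t
    have hdiv : HasDerivAt (fun t => S1 t / S t)
        ((S2 t * S t - S1 t * S1 t) / (S t) ^ 2) t := (hS1 t).div (hS t) (hSne t)
    have hmul := (hasDerivAt_id t).mul hdiv
    have hlog := (hS t).log (hSne t)
    have h := hmul.sub hlog
    refine h.congr_deriv ?_
    have := hSne t
    simp only [id]
    field_simp
    ring
  have hcont : Continuous fun t => t * (S2 t / S t - (S1 t / S t) ^ 2) := by
    apply continuous_id.mul
    exact ((hS2cont.div hScont hSne).sub ((hS1cont.div hScont hSne).pow 2))
  have hint : ∫ t in (0:ℝ)..1, t * (S2 t / S t - (S1 t / S t) ^ 2) = G 1 - G 0 :=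
    intervalIntegral.integral_eq_sub_of_hasDerivAt (fun t _ => hG t)
      (hcont.intervalIntegrable 0 1)
  have hsum : ∀ (t : ℝ) (f : Fin V → ℝ),
      ∑ v, softmax (z + t • ε) v * f v
        = (∑ v, f v * Real.exp (z v + t * ε v)) / S t := by
    intro t f
    rw [Finset.sum_div]
    apply Finset.sum_congr rfl
    intro v _
    simp only [softmax, Pi.add_apply, Pi.smul_apply, smul_eq_mul, hSdef]
    rw [div_mul_eq_mul_div, mul_comm]
  -- rewrite the RHS integrand
  have hRHS : (∫ t in (0:ℝ)..1,
          t * ((∑ v, softmax (z + t • ε) v * (ε v) ^ 2)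
            - (∑ v, softmax (z + t • ε) v * ε v) ^ 2))
      = ∫ t in (0:ℝ)..1, t * (S2 t / S t - (S1 t / S t) ^ 2) := by
    apply intervalIntegral.integral_congr
    intro t _
    have h1 := hsum t (fun v => (ε v) ^ 2)
    have h2 := hsum t ε
    simp only [h1, h2, hS1def, hS2def]
  have hz0 : logSumExp z = Real.log (S 0) := by
    simp [logSumExp, hSdef]
  have hz1 : logSumExp (z + ε) = Real.log (S 1) := by
    simp [logSumExp, hSdef]
  have hsm : ∑ v, softmax (z + ε) v * ε v = S1 1 / S 1 := by
    have := hsum 1 ε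
    rw [one_smul] at this
    rw [this, hS1def]
  rw [hRHS, hint, hz0, hz1, hsm, hGdef]
  simp
  ring
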